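/- Let G = ℤ, Q = {0,1}, X_n = {-n,...,n} and X'_n = {-n,...,2^n}. Let c_1 be identically 0 and c_2(g) = 1 iff g < 0. Then d_{B,{X_n}}(c_1,c_2) = 1/2 while d_{B,{X'_n}}(c_1,c_2) = 0. Hence the equivalence classes of the Besicovitch pseudodistance depend on the choice of exhaustive sequence. -/

import Mathlib

open Filter

noncomputable def hamDist {G Q : Type*} (U : Set G) (c₁ c₂ : G → Q) : ℕ :=
  {x ∈ U | c₁ x ≠ c₂ x}.ncard

noncomputable def besDist {G Q : Type*} (X : ℕ → Finset G) (c₁ c₂ : G → Q) : ℝ :=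
  limsup (fun n => (hamDist (X n : Set G) c₁ c₂ : ℝ) / (X n).card) atTop

lemma hamDist_Icc (n : ℕ) (m : ℤ) (hm : 0 ≤ m) :
    hamDist (Finset.Icc (-(n : ℤ)) m : Set ℤ) (fun _ => false)
      (fun g => decide (g < 0)) = n := by
  have hset : {x ∈ (Finset.Icc (-(n : ℤ)) m : Set ℤ) |
      (fun _ => false) x ≠ (fun g : ℤ => decide (g < 0)) x}
      = (Finset.Icc (-(n : ℤ)) (-1) : Set ℤ) := by
    ext x
    simp only [Set.mem_setOf_eq, Finset.coe_Icc, Set.mem_Icc, ne_eq]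
    constructor
    · rintro ⟨⟨h1, h2⟩, h3⟩
      simp only [false_eq_decide_iff, not_not] at h3
      exact ⟨h1, by omega⟩
    · rintro ⟨h1, h2⟩
      refine ⟨⟨h1, by omega⟩, ?_⟩
      simp only [false_eq_decide_iff, not_not]
      omega
  rw [hamDist, hset, Set.ncard_coe_finset, Int.card_Icc]
  omega

lemma tendsto_half : Tendsto (fun n : ℕ => (n : ℝ) / (2 * n + 1)) atTop (nhds (1 / 2)) := by
  have h : Tendsto (fun n : ℕ => (1 : ℝ) / (2 + 1 / n)) atTop (nhds (1 / 2)) := by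
    have : Tendsto (fun n : ℕ => (2 : ℝ) + 1 / n) atTop (nhds 2) := by
      simpa using tendsto_const_nhds.add (tendsto_one_div_atTop_nhds_zero_nat : Tendsto (fun n : ℕ => (1 : ℝ) / n) atTop (nhds 0))
    simpa [one_div] using this.inv₀ (by norm_num)
  refine h.congr' ?_
  filter_upwards [eventually_gt_atTop 0] with n hn
  have hn' : (0:ℝ) < n := by exact_mod_cast hn
  field_simp

theorem besicovitch_depends_on_sequence :
    let X : ℕ → Finset ℤ := fun n => Finset.Icc (-(n : ℤ)) n
    let X' : ℕ → Finset ℤ := fun n => Finset.Icc (-(n : ℤ)) (2 ^ n)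
    let c₁ : ℤ → Bool := fun _ => false
    let c₂ : ℤ → Bool := fun g => decide (g < 0)
    besDist X c₁ c₂ = 1 / 2 ∧ besDist X' c₁ c₂ = 0 := by
  intro X X' c₁ c₂
  constructor
  · have heq : (fun n => (hamDist (X n : Set ℤ) c₁ c₂ : ℝ) / (X n).card)
        = fun n : ℕ => (n : ℝ) / (2 * n + 1) := by
      funext n
      rw [show (X n : Set ℤ) = (Finset.Icc (-(n : ℤ)) n : Set ℤ) from rfl,
        hamDist_Icc n n (by positivity)]
      congr 1
      rw [show X n = Finset.Icc (-(n : ℤ)) n from rfl, Int.card_Icc]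
      have hnat : ((n : ℤ) + 1 - -(n : ℤ)).toNat = 2 * n + 1 := by omega
      rw [hnat]; push_cast; ring
    rw [besDist, heq]
    exact tendsto_half.limsup_eq
  · have heq : (fun n => (hamDist (X' n : Set ℤ) c₁ c₂ : ℝ) / (X' n).card)
        = fun n : ℕ => (n : ℝ) / (2 ^ n + n + 1) := by
      funext n
      rw [show (X' n : Set ℤ) = (Finset.Icc (-(n : ℤ)) (2 ^ n) : Set ℤ) from rfl,
        hamDist_Icc n (2 ^ n) (by positivity)]
      congr 1
      rw [show X' n = Finset.Icc (-(n : ℤ)) (2 ^ n) from rfl, Int.card_Icc]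
      have hnat : ((2 : ℤ) ^ n + 1 - -(n : ℤ)).toNat = 2 ^ n + n + 1 := by
        have hk : (2 : ℤ) ^ n = ((2 ^ n : ℕ) : ℤ) := by push_cast; ring
        rw [hk]; generalize (2 : ℕ) ^ n = k; omega
      rw [hnat]; push_cast; ring
    rw [besDist, heq]
    have htend : Tendsto (fun n : ℕ => (n : ℝ) / (2 ^ n + n + 1)) atTop (nhds 0) := by
      have hub : Tendsto (fun n : ℕ => (n : ℝ) * (1 / 2) ^ n) atTop (nhds 0) :=
        tendsto_self_mul_const_pow_of_lt_one (by norm_num) (by norm_num)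
      refine tendsto_of_tendsto_of_tendsto_of_le_of_le tendsto_const_nhds hub ?_ ?_
      · intro n; positivity
      · intro n
        rw [div_le_iff₀ (by positivity)]
        have h2 : (0:ℝ) < 2 ^ n := by positivity
        have : (n : ℝ) * (1/2)^n * 2 ^ n = n := by
          rw [mul_assoc, div_pow, one_pow, div_mul_cancel₀ _ (by positivity : ((2:ℝ)^n) ≠ 0), mul_one]
        nlinarith [mul_nonneg (mul_nonneg (Nat.cast_nonneg (α := ℝ) n) (by positivity : (0:ℝ) ≤ (1/2:ℝ)^n)) (by positivity : (0:ℝ) ≤ (n:ℝ)+1)]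
    exact htend.limsup_eq
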